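/- Define F : ℂ \ {0,1} → ℝ by F(t) = |t|^{1/24} · |t−1|^{1/24} / (|√t − 1| + |√t + 1|)^{1/4}, where √t denotes the principal complex square root of t (the value of the denominator does not depend on the choice of square root). Then F(1−t) = F(t) for every t ∈ ℂ \ {0,1}. -/

import Mathlib

/-- Key identity: `(|√t−1| + |√t+1|)² = 2(|t| + |t−1| + 1)`, which is manifestly
symmetric under `t ↦ 1 − t`. -/
lemma den_sq (t : ℂ) (h0 : t ≠ 0) :
    (‖t ^ ((1 : ℂ) / 2) - 1‖ + ‖t ^ ((1 : ℂ) / 2) + 1‖) ^ 2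
      = 2 * (‖t‖ + ‖t - 1‖ + 1) := by
  set s := t ^ ((1 : ℂ) / 2) with hs
  have hmul : s * s = t := by
    rw [hs, ← Complex.cpow_add _ _ h0]
    norm_num
  have h1 : ‖s - 1‖ * ‖s + 1‖ = ‖t - 1‖ := by
    rw [← norm_mul]
    congr 1
    rw [← hmul]; ring
  have h2 : ‖s - 1‖ ^ 2 + ‖s + 1‖ ^ 2 = 2 * ‖t‖ + 2 := by
    have ht : ‖t‖ = ‖s‖ ^ 2 := by
      rw [← hmul, norm_mul]; ring
    rw [ht, Complex.sq_norm, Complex.sq_norm, Complex.sq_norm]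
    simp [Complex.normSq_apply, Complex.sub_re, Complex.sub_im, Complex.add_re, Complex.add_im]
    ring
  nlinarith [h1, h2]

/-- `F(t) = |t|^{1/24} |t−1|^{1/24} / (|√t−1| + |√t+1|)^{1/4}`, where `√t = t^{1/2}` is
the principal complex square root (the value of the denominator does not depend on the
choice of square root). -/
noncomputable def F (t : ℂ) : ℝ :=
  ‖t‖ ^ ((1 : ℝ) / 24) * ‖t - 1‖ ^ ((1 : ℝ) / 24) /
    (‖t ^ ((1 : ℂ) / 2) - 1‖ + ‖t ^ ((1 : ℂ) / 2) + 1‖) ^ ((1 : ℝ) / 4)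

/-- `F(1−t) = F(t)` for every `t ∈ ℂ \ {0,1}`. -/
theorem F_one_sub (t : ℂ) (h0 : t ≠ 0) (h1 : t ≠ 1) : F (1 - t) = F t := by
  have h0' : (1 : ℂ) - t ≠ 0 := sub_ne_zero.mpr (Ne.symm h1)
  have e1 := den_sq (1 - t) h0'
  have e2 := den_sq t h0
  have habs1 : ‖1 - t‖ = ‖t - 1‖ := norm_sub_rev 1 t
  have habs2 : ‖1 - t - 1‖ = ‖t‖ := by
    rw [show (1 : ℂ) - t - 1 = -t by ring]; exact norm_neg t
  have hsq : (‖(1 - t) ^ ((1 : ℂ) / 2) - 1‖ + ‖(1 - t) ^ ((1 : ℂ) / 2) + 1‖) ^ 2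
      = (‖t ^ ((1 : ℂ) / 2) - 1‖ + ‖t ^ ((1 : ℂ) / 2) + 1‖) ^ 2 := by
    rw [e1, e2, habs1, habs2]; ring
  have hd : ‖(1 - t) ^ ((1 : ℂ) / 2) - 1‖ + ‖(1 - t) ^ ((1 : ℂ) / 2) + 1‖
      = ‖t ^ ((1 : ℂ) / 2) - 1‖ + ‖t ^ ((1 : ℂ) / 2) + 1‖ := by
    have ha : (0:ℝ) ≤ ‖(1 - t) ^ ((1 : ℂ) / 2) - 1‖ + ‖(1 - t) ^ ((1 : ℂ) / 2) + 1‖ := by positivity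
    have hb : (0:ℝ) ≤ ‖t ^ ((1 : ℂ) / 2) - 1‖ + ‖t ^ ((1 : ℂ) / 2) + 1‖ := by positivity
    calc _ = Real.sqrt (_ ^ 2) := (Real.sqrt_sq ha).symm
    _ = Real.sqrt (_ ^ 2) := by rw [hsq]
    _ = _ := Real.sqrt_sq hb
  unfold F
  rw [hd, habs1, habs2, mul_comm]
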